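/- Let H be the graph on all labeled n-vertex graphs with G₁ ~ G₂ iff G₁ - v = G₂ - v for some vertex v, equipped with the random walk m_G(G') = (1/n)·Σ_{v: G-v=G'-v} p^{d_{G'}(v)}(1-p)^{n-1-d_{G'}(v)} whose invariant distribution is G(n,p). Then for all G₁, G₂ ∈ V(H), the Ricci curvature satisfies κ(G₁, G₂) ≥ 1/n. -/

import Mathlib

open Finset

/-- A probability vector on a finite set. -/
def IsProbVec {V : Type*} [Fintype V] (m : V → ℝ) : Prop :=
  (∀ x, 0 ≤ m x) ∧ ∑ x, m x = 1

/-- A coupling between two probability vectors. -/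
def IsCoupling {V : Type*} [Fintype V] (m₁ m₂ : V → ℝ) (A : V → V → ℝ) : Prop :=
  (∀ x y, 0 ≤ A x y) ∧ (∀ x, ∑ y, A x y = m₁ x) ∧ (∀ y, ∑ x, A x y = m₂ y)

/-- The L¹-Wasserstein (transportation) distance between two probability vectors,
with respect to the graph metric. -/
noncomputable def Wdist {V : Type*} [Fintype V] (G : SimpleGraph V) (m₁ m₂ : V → ℝ) : ℝ :=
  sInf {s | ∃ A : V → V → ℝ, IsCoupling m₁ m₂ A ∧
    s = ∑ x, ∑ y, A x y * (G.dist x y : ℝ)}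

/-- A random walk on a graph: at each vertex a probability measure supported on
the closed neighborhood. -/
def IsRandomWalk {V : Type*} [Fintype V] (G : SimpleGraph V) (m : V → V → ℝ) : Prop :=
  ∀ x, IsProbVec (m x) ∧ ∀ y, m x y ≠ 0 → y = x ∨ G.Adj x y

/-- Ollivier's Ricci curvature `κ(x,y) = 1 - W(m_x, m_y)/d(x,y)`. -/
noncomputable def ricci {V : Type*} [Fintype V] (G : SimpleGraph V) (m : V → V → ℝ)
    (x y : V) : ℝ :=
  1 - Wdist G (m x) (m y) / (G.dist x y : ℝ)

/-- The averaging operator `(Mf)(x) = ∑_y f(y)·m_x(y)`. -/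
def Mop {V : Type*} [Fintype V] (m : V → V → ℝ) (f : V → ℝ) : V → ℝ :=
  fun x => ∑ y, f y * m x y

/-- Labeled graphs on `n` vertices, encoded as sets of non-diagonal unordered pairs. -/
def LabGraph (n : ℕ) := {E : Finset (Sym2 (Fin n)) // ∀ e ∈ E, ¬ e.IsDiag}

instance (n : ℕ) : Fintype (LabGraph n) := by unfold LabGraph; infer_instance
instance (n : ℕ) : DecidableEq (LabGraph n) := by unfold LabGraph; infer_instance

/-- Delete a vertex: keep only the edges not containing `v`. -/
def delVert {n : ℕ} (E : Finset (Sym2 (Fin n))) (v : Fin n) : Finset (Sym2 (Fin n)) :=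
  E.filter (fun e => v ∉ e)

/-- The degree of `v` in the edge set `E`. -/
def degVert {n : ℕ} (E : Finset (Sym2 (Fin n))) (v : Fin n) : ℕ :=
  (E.filter (fun e => v ∈ e)).card

/-- The vertex re-randomization graph: `G₁ ~ G₂` iff `G₁ ≠ G₂` and `G₁ - v = G₂ - v`
for some vertex `v`. -/
def vertexGraph (n : ℕ) : SimpleGraph (LabGraph n) where
  Adj G₁ G₂ := G₁ ≠ G₂ ∧ ∃ v : Fin n, delVert G₁.val v = delVert G₂.val v
  symm := ⟨fun _ _ h => ⟨h.1.symm, h.2.imp fun _ hv => hv.symm⟩⟩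
  loopless := ⟨fun G h => h.1 rfl⟩

/-- The `G(n,p)` vertex re-randomization walk:
`m_G(G') = (1/n)·∑_{v : G-v = G'-v} p^{d_{G'}(v)}(1-p)^{n-1-d_{G'}(v)}`. -/
noncomputable def gnpWalk (n : ℕ) (p : ℝ) : LabGraph n → LabGraph n → ℝ :=
  fun G G' => (1 / (n : ℝ)) *
    ∑ v ∈ Finset.univ.filter (fun v : Fin n => delVert G.val v = delVert G'.val v),
      p ^ (degVert G'.val v) * (1 - p) ^ (n - 1 - degVert G'.val v)

/-- The `G(n,p)` distribution `ν(G) = p^{e(G)}(1-p)^{C(n,2)-e(G)}`. -/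
noncomputable def gnpDist (n : ℕ) (p : ℝ) : LabGraph n → ℝ :=
  fun G => p ^ (G.val.card) * (1 - p) ^ (n.choose 2 - G.val.card)

namespace GnpAux
variable {n : ℕ}

def star2 (E : Finset (Sym2 (Fin n))) (u : Fin n) : Finset (Sym2 (Fin n)) :=
  E.filter (fun e => u ∈ e)

lemma degVert_eq (E : Finset (Sym2 (Fin n))) (u : Fin n) : degVert E u = (star2 E u).card := rfl

lemma delVert_union_star2 (E : Finset (Sym2 (Fin n))) (u : Fin n) :
    delVert E u ∪ star2 E u = E := by
  rw [delVert, star2, union_comm, Finset.filter_union_filter_not_eq]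

lemma eq_of_parts {E F : Finset (Sym2 (Fin n))} (u : Fin n)
    (h1 : delVert E u = delVert F u) (h2 : star2 E u = star2 F u) : E = F := by
  rw [← delVert_union_star2 E u, h1, h2, delVert_union_star2]

lemma delVert_union (D S : Finset (Sym2 (Fin n))) (u : Fin n) :
    delVert (D ∪ S) u = delVert D u ∪ delVert S u := Finset.filter_union _ _ _

lemma star2_union (D S : Finset (Sym2 (Fin n))) (u : Fin n) :
    star2 (D ∪ S) u = star2 D u ∪ star2 S u := Finset.filter_union _ _ _

lemma delVert_delVert (E : Finset (Sym2 (Fin n))) (u v : Fin n) :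
    delVert (delVert E u) v = delVert (delVert E v) u := by
  simp [delVert, Finset.filter_filter, and_comm]

lemma delVert_star2 (E : Finset (Sym2 (Fin n))) (u : Fin n) :
    delVert (star2 E u) u = ∅ := by
  simp [delVert, star2, Finset.filter_filter]

lemma star2_delVert (E : Finset (Sym2 (Fin n))) (u : Fin n) :
    star2 (delVert E u) u = ∅ := by
  simp [delVert, star2, Finset.filter_filter]

lemma delVert_idem (E : Finset (Sym2 (Fin n))) (u : Fin n) :
    delVert (delVert E u) u = delVert E u := by
  simp [delVert, Finset.filter_filter]

lemma star2_idem (E : Finset (Sym2 (Fin n))) (u : Fin n) :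
    star2 (star2 E u) u = star2 E u := by
  simp [star2, Finset.filter_filter]

/-- key: parts of `delVert B u ∪ star2 E u` -/
lemma delVert_mix (B E : Finset (Sym2 (Fin n))) (u : Fin n) :
    delVert (delVert B u ∪ star2 E u) u = delVert B u := by
  rw [delVert_union, delVert_idem, delVert_star2, union_empty]

lemma star2_mix (B E : Finset (Sym2 (Fin n))) (u : Fin n) :
    star2 (delVert B u ∪ star2 E u) u = star2 E u := by
  rw [star2_union, star2_delVert, star2_idem, empty_union]

def Tset (n : ℕ) (u : Fin n) : Finset (Sym2 (Fin n)) :=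
  Finset.univ.filter (fun e => u ∈ e ∧ ¬ e.IsDiag)

lemma card_Tset (u : Fin n) : (Tset n u).card = n - 1 := by
  have himg : Tset n u = (Finset.univ.erase u).image (fun w => s(u, w)) := by
    ext e
    simp only [Tset, Finset.mem_filter, Finset.mem_univ, true_and, Finset.mem_image,
      Finset.mem_erase]
    constructor
    · intro ⟨hu, hd⟩
      revert hu hd
      induction e using Sym2.ind with
      | _ a b =>
        intro hu hd
        rw [Sym2.mem_iff] at hu
        rw [Sym2.isDiag_iff_proj_eq] at hd
        rcases hu with h | h
        · subst h
          exact ⟨b, ⟨fun hb => hd hb.symm, trivial⟩, rfl⟩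
        · subst h
          exact ⟨a, ⟨fun ha => hd ha, trivial⟩, Sym2.eq_swap⟩
    · rintro ⟨w, hw, rfl⟩
      exact ⟨Sym2.mem_mk_left u w, by simp [Sym2.isDiag_iff_proj_eq]; exact fun h => hw.1 h.symm⟩
  rw [himg, Finset.card_image_of_injOn, Finset.card_erase_of_mem (Finset.mem_univ u)]
  · simp
  · intro a ha b hb hab
    simp only [Finset.mem_coe, Finset.mem_erase] at ha hb
    rw [Sym2.eq_iff] at hab
    rcases hab with ⟨_, h⟩ | ⟨h1, h2⟩
    · exact h
    · exact absurd h1.symm (by simpa using hb)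

/-- the modified graph: base `B` off `u`, star of `H` at `u`. -/
def phi (B : LabGraph n) (u : Fin n) (H : LabGraph n) : LabGraph n :=
  ⟨delVert B.val u ∪ star2 H.val u, by
    intro e he
    rcases Finset.mem_union.1 he with h | h
    · exact B.prop e (Finset.mem_filter.1 h).1
    · exact H.prop e (Finset.mem_filter.1 h).1⟩

lemma phi_delVert (B : LabGraph n) (u : Fin n) (H : LabGraph n) :
    delVert (phi B u H).val u = delVert B.val u := delVert_mix _ _ _

lemma phi_star2 (B : LabGraph n) (u : Fin n) (H : LabGraph n) :
    star2 (phi B u H).val u = star2 H.val u := star2_mix _ _ _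

lemma phi_deg (B : LabGraph n) (u : Fin n) (H : LabGraph n) :
    degVert (phi B u H).val u = degVert H.val u := by
  rw [degVert_eq, degVert_eq, phi_star2]

/-- weight of re-randomizing vertex u to the star of H -/
noncomputable def wgt (p : ℝ) (H : LabGraph n) (u : Fin n) : ℝ :=
  p ^ (degVert H.val u) * (1 - p) ^ (n - 1 - degVert H.val u)

lemma star2_subset_Tset (H : LabGraph n) (u : Fin n) : star2 H.val u ⊆ Tset n u := by
  intro e he
  rcases Finset.mem_filter.1 he with ⟨h1, h2⟩
  exact Finset.mem_filter.2 ⟨Finset.mem_univ _, h2, H.prop e h1⟩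

/-- Lemma A: total weight over graphs agreeing with G off u is 1. -/
lemma sum_wgt (p : ℝ) (G : LabGraph n) (u : Fin n) :
    ∑ H ∈ Finset.univ.filter (fun H : LabGraph n => delVert G.val u = delVert H.val u),
      wgt p H u = 1 := by
  have key : ∑ H ∈ Finset.univ.filter
        (fun H : LabGraph n => delVert G.val u = delVert H.val u), wgt p H u
      = ∑ S ∈ (Tset n u).powerset, p ^ S.card * (1 - p) ^ ((Tset n u).card - S.card) := by
    refine Finset.sum_bij' (fun H _ => star2 H.val u)
      (fun S hS => (⟨delVert G.val u ∪ S, ?_⟩ : LabGraph n)) ?_ ?_ ?_ ?_ ?_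
    · intro e he
      rcases Finset.mem_union.1 he with h | h
      · exact G.prop e (Finset.mem_filter.1 h).1
      · exact ((Finset.mem_filter.1 ((Finset.mem_powerset.1 hS) h)).2).2
    · intro H hH
      exact Finset.mem_powerset.2 (star2_subset_Tset H u)
    · intro S hS
      refine Finset.mem_filter.2 ⟨Finset.mem_univ _, ?_⟩
      have hSstar : ∀ e ∈ S, u ∈ e := fun e he =>
        (Finset.mem_filter.1 ((Finset.mem_powerset.1 hS) he)).2.1
      have hS0 : delVert S u = ∅ :=
        Finset.filter_false_of_mem (fun e he hne => hne (hSstar e he))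
      rw [delVert_union, delVert_idem, hS0, union_empty]
    · intro H hH
      apply Subtype.ext
      have h1 := (Finset.mem_filter.1 hH).2
      show delVert G.val u ∪ star2 H.val u = H.val
      rw [h1, delVert_union_star2]
    · intro S hS
      have hSstar : ∀ e ∈ S, u ∈ e := fun e he =>
        (Finset.mem_filter.1 ((Finset.mem_powerset.1 hS) he)).2.1
      have hSeq : S = star2 S u := by rw [star2, Finset.filter_true_of_mem hSstar]
      show star2 (delVert G.val u ∪ S) u = S
      rw [star2_union, star2_delVert, empty_union]
      exact hSeq.symm
    · intro H hH
      rw [wgt, degVert_eq, card_Tset]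
  rw [key, card_Tset]
  have hpa := Finset.prod_add (fun _ : Sym2 (Fin n) => p) (fun _ => 1 - p) (Tset n u)
  simp only [Finset.prod_const] at hpa
  have h2 : ∀ S ∈ (Tset n u).powerset, p ^ S.card * (1 - p) ^ (n - 1 - S.card)
      = p ^ S.card * (1 - p) ^ ((Tset n u) \ S).card := by
    intro S hS
    rw [Finset.card_sdiff_of_subset (Finset.mem_powerset.1 hS), card_Tset]
  rw [Finset.sum_congr rfl h2, ← hpa]
  have hone : p + (1 - p) = 1 := by ring
  rw [hone, one_pow]


lemma wgt_nonneg {p : ℝ} (hp0 : 0 ≤ p) (hp1 : p ≤ 1) (H : LabGraph n) (u : Fin n) :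
    0 ≤ wgt p H u :=
  mul_nonneg (pow_nonneg hp0 _) (pow_nonneg (by linarith) _)

lemma gnpWalk_apply (p : ℝ) (G H : LabGraph n) :
    gnpWalk n p G H = (1 / (n:ℝ)) * ∑ v ∈ Finset.univ.filter
      (fun v => delVert G.val v = delVert H.val v), wgt p H v := rfl

lemma gnpWalk_nonneg {p : ℝ} (hp0 : 0 ≤ p) (hp1 : p ≤ 1) (G H : LabGraph n) :
    0 ≤ gnpWalk n p G H := by
  rw [gnpWalk_apply]
  apply mul_nonneg (by positivity)
  exact Finset.sum_nonneg fun v _ => wgt_nonneg hp0 hp1 H v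

lemma gnpWalk_sum_one (hn : 0 < n) (p : ℝ) (G : LabGraph n) :
    ∑ H, gnpWalk n p G H = 1 := by
  have hcomm : ∑ H : LabGraph n, ∑ v ∈ Finset.univ.filter
        (fun v => delVert G.val v = delVert H.val v), wgt p H v
      = ∑ v : Fin n, ∑ H ∈ Finset.univ.filter
        (fun H : LabGraph n => delVert G.val v = delVert H.val v), wgt p H v := by
    simp_rw [Finset.sum_filter]
    exact Finset.sum_comm
  calc ∑ H, gnpWalk n p G H
      = (1/(n:ℝ)) * ∑ H : LabGraph n, ∑ v ∈ Finset.univ.filter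
          (fun v => delVert G.val v = delVert H.val v), wgt p H v := by
        rw [Finset.mul_sum]; rfl
    _ = (1/(n:ℝ)) * ∑ v : Fin n, (1:ℝ) := by
        rw [hcomm]
        congr 1
        exact Finset.sum_congr rfl fun v _ => sum_wgt p G v
    _ = 1 := by
        simp only [Finset.sum_const, Finset.card_univ, Fintype.card_fin, nsmul_eq_mul, mul_one]
        rw [one_div, inv_mul_cancel₀]
        exact_mod_cast hn.ne'

lemma gnpWalk_isProbVec {p : ℝ} (hn : 0 < n) (hp0 : 0 ≤ p) (hp1 : p ≤ 1) (G : LabGraph n) :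
    IsProbVec (gnpWalk n p G) :=
  ⟨fun H => gnpWalk_nonneg hp0 hp1 G H, gnpWalk_sum_one hn p G⟩

end GnpAux

section WGen
open Finset
variable {V : Type*} [Fintype V] (G : SimpleGraph V)

lemma cost_nonneg {m₁ m₂ : V → ℝ} {A : V → V → ℝ} (hA : IsCoupling m₁ m₂ A) :
    0 ≤ ∑ x, ∑ y, A x y * (G.dist x y : ℝ) :=
  Finset.sum_nonneg fun x _ => Finset.sum_nonneg fun y _ =>
    mul_nonneg (hA.1 x y) (Nat.cast_nonneg _)

lemma Wdist_bddBelow (m₁ m₂ : V → ℝ) :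
    BddBelow {s | ∃ A : V → V → ℝ, IsCoupling m₁ m₂ A ∧
      s = ∑ x, ∑ y, A x y * (G.dist x y : ℝ)} := by
  refine ⟨0, ?_⟩
  rintro s ⟨A, hA, rfl⟩
  exact cost_nonneg G hA

lemma Wdist_le_of_coupling {m₁ m₂ : V → ℝ} {A : V → V → ℝ} (hA : IsCoupling m₁ m₂ A) :
    Wdist G m₁ m₂ ≤ ∑ x, ∑ y, A x y * (G.dist x y : ℝ) :=
  csInf_le (Wdist_bddBelow G m₁ m₂) ⟨A, hA, rfl⟩

lemma Wdist_self_nonpos {m : V → ℝ} (hm : ∀ x, 0 ≤ m x) : Wdist G m m ≤ 0 := by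
  classical
  have hA : IsCoupling m m (fun x y => if x = y then m x else 0) := by
    refine ⟨fun x y => ?_, fun x => ?_, fun y => ?_⟩
    · dsimp only; split
      · exact hm x
      · exact le_refl 0
    · simp
    · simp
  refine (Wdist_le_of_coupling G hA).trans (le_of_eq ?_)
  rw [Finset.sum_eq_zero]
  intro x _
  rw [Finset.sum_eq_zero]
  intro y _
  split
  · rename_i h'; subst h'; simp
  · simp

lemma prod_coupling {m₁ m₂ : V → ℝ} (h₁ : IsProbVec m₁) (h₂ : IsProbVec m₂) :
    IsCoupling m₁ m₂ (fun x y => m₁ x * m₂ y) := by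
  refine ⟨fun x y => mul_nonneg (h₁.1 x) (h₂.1 y), fun x => ?_, fun y => ?_⟩
  · rw [← Finset.mul_sum, h₂.2, mul_one]
  · rw [← Finset.sum_mul, h₁.2, one_mul]

lemma glue_sum_z {m₁ m₂ m₃ : V → ℝ} {A B : V → V → ℝ}
    (hA : IsCoupling m₁ m₂ A) (hB : IsCoupling m₂ m₃ B) (x y : V) :
    ∑ z, (if m₂ y = 0 then 0 else A x y * B y z / m₂ y) = A x y := by
  by_cases hy : m₂ y = 0
  · have hAz : A x y = 0 := by
      have h := hA.2.2 y
      rw [hy] at h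
      exact (Finset.sum_eq_zero_iff_of_nonneg (fun x' _ => hA.1 x' y)).1 h x (Finset.mem_univ x)
    simp [hy, hAz]
  · simp only [if_neg hy]
    rw [← Finset.sum_div, ← Finset.mul_sum, hB.2.1 y, mul_div_assoc, div_self hy, mul_one]

lemma glue_sum_x {m₁ m₂ m₃ : V → ℝ} {A B : V → V → ℝ}
    (hA : IsCoupling m₁ m₂ A) (hB : IsCoupling m₂ m₃ B) (y z : V) :
    ∑ x, (if m₂ y = 0 then 0 else A x y * B y z / m₂ y) = B y z := by
  by_cases hy : m₂ y = 0
  · have hBz : B y z = 0 := by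
      have h := hB.2.1 y
      rw [hy] at h
      exact (Finset.sum_eq_zero_iff_of_nonneg (fun z' _ => hB.1 y z')).1 h z (Finset.mem_univ z)
    simp [hy, hBz]
  · simp only [if_neg hy]
    simp_rw [mul_div_assoc]
    rw [← Finset.sum_mul, hA.2.2 y]
    field_simp

lemma glue_coupling {m₁ m₂ m₃ : V → ℝ} {A B : V → V → ℝ}
    (hA : IsCoupling m₁ m₂ A) (hB : IsCoupling m₂ m₃ B) :
    IsCoupling m₁ m₃ (fun x z => ∑ y, if m₂ y = 0 then 0 else A x y * B y z / m₂ y) := by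
  have hm2 : ∀ y, 0 ≤ m₂ y := fun y => (hA.2.2 y) ▸ Finset.sum_nonneg fun x _ => hA.1 x y
  refine ⟨fun x z => Finset.sum_nonneg fun y _ => ?_, fun x => ?_, fun z => ?_⟩
  · split
    · exact le_refl 0
    · exact div_nonneg (mul_nonneg (hA.1 x y) (hB.1 y z)) (hm2 y)
  · rw [Finset.sum_comm]
    rw [Finset.sum_congr rfl (fun y _ => glue_sum_z hA hB x y)]
    exact hA.2.1 x
  · rw [Finset.sum_comm]
    rw [Finset.sum_congr rfl (fun y _ => glue_sum_x hA hB y z)]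
    exact hB.2.2 z

lemma glue_cost (hc : G.Connected) {m₁ m₂ m₃ : V → ℝ} {A B : V → V → ℝ}
    (hA : IsCoupling m₁ m₂ A) (hB : IsCoupling m₂ m₃ B) :
    ∑ x, ∑ z, (∑ y, if m₂ y = 0 then 0 else A x y * B y z / m₂ y) * (G.dist x z : ℝ)
      ≤ (∑ x, ∑ y, A x y * (G.dist x y : ℝ)) + ∑ y, ∑ z, B y z * (G.dist y z : ℝ) := by
  have hm2 : ∀ y, 0 ≤ m₂ y := fun y => (hA.2.2 y) ▸ Finset.sum_nonneg fun x _ => hA.1 x y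
  have ht : ∀ x y z, 0 ≤ (if m₂ y = 0 then 0 else A x y * B y z / m₂ y) := by
    intro x y z
    split
    · exact le_refl 0
    · exact div_nonneg (mul_nonneg (hA.1 x y) (hB.1 y z)) (hm2 y)
  calc ∑ x, ∑ z, (∑ y, if m₂ y = 0 then 0 else A x y * B y z / m₂ y) * (G.dist x z : ℝ)
      = ∑ x, ∑ z, ∑ y, (if m₂ y = 0 then 0 else A x y * B y z / m₂ y) * (G.dist x z : ℝ) := by
        simp_rw [Finset.sum_mul]
    _ ≤ ∑ x, ∑ z, ∑ y, (if m₂ y = 0 then 0 else A x y * B y z / m₂ y)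
          * ((G.dist x y : ℝ) + (G.dist y z : ℝ)) := by
        refine Finset.sum_le_sum fun x _ => Finset.sum_le_sum fun z _ =>
          Finset.sum_le_sum fun y _ => ?_
        refine mul_le_mul_of_nonneg_left ?_ (ht x y z)
        exact_mod_cast hc.dist_triangle
    _ = (∑ x, ∑ z, ∑ y, (if m₂ y = 0 then 0 else A x y * B y z / m₂ y) * (G.dist x y : ℝ))
        + ∑ x, ∑ z, ∑ y, (if m₂ y = 0 then 0 else A x y * B y z / m₂ y) * (G.dist y z : ℝ) := by
        simp_rw [mul_add, Finset.sum_add_distrib]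
    _ = (∑ x, ∑ y, A x y * (G.dist x y : ℝ)) + ∑ y, ∑ z, B y z * (G.dist y z : ℝ) := by
        congr 1
        · refine Finset.sum_congr rfl fun x _ => ?_
          rw [Finset.sum_comm]
          refine Finset.sum_congr rfl fun y _ => ?_
          rw [← Finset.sum_mul, glue_sum_z hA hB x y]
        · calc ∑ x, ∑ z, ∑ y, (if m₂ y = 0 then 0 else A x y * B y z / m₂ y) * (G.dist y z : ℝ)
              = ∑ x, ∑ y, ∑ z, (if m₂ y = 0 then 0 else A x y * B y z / m₂ y)
                  * (G.dist y z : ℝ) := Finset.sum_congr rfl fun x _ => Finset.sum_comm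
            _ = ∑ y, ∑ x, ∑ z, (if m₂ y = 0 then 0 else A x y * B y z / m₂ y)
                  * (G.dist y z : ℝ) := Finset.sum_comm
            _ = ∑ y, ∑ z, ∑ x, (if m₂ y = 0 then 0 else A x y * B y z / m₂ y)
                  * (G.dist y z : ℝ) := Finset.sum_congr rfl fun y _ => Finset.sum_comm
            _ = ∑ y, ∑ z, B y z * (G.dist y z : ℝ) := by
                refine Finset.sum_congr rfl fun y _ => Finset.sum_congr rfl fun z _ => ?_
                rw [← Finset.sum_mul, glue_sum_x hA hB y z]
    
lemma Wdist_triangle (hc : G.Connected) {m₁ m₂ m₃ : V → ℝ}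
    (h12 : ∃ A, IsCoupling m₁ m₂ A) (h23 : ∃ B, IsCoupling m₂ m₃ B) :
    Wdist G m₁ m₃ ≤ Wdist G m₁ m₂ + Wdist G m₂ m₃ := by
  obtain ⟨A₀, hA₀⟩ := h12
  obtain ⟨B₀, hB₀⟩ := h23
  have hne12 : {s | ∃ A : V → V → ℝ, IsCoupling m₁ m₂ A ∧
      s = ∑ x, ∑ y, A x y * (G.dist x y : ℝ)}.Nonempty := ⟨_, A₀, hA₀, rfl⟩
  have hne23 : {s | ∃ B : V → V → ℝ, IsCoupling m₂ m₃ B ∧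
      s = ∑ x, ∑ y, B x y * (G.dist x y : ℝ)}.Nonempty := ⟨_, B₀, hB₀, rfl⟩
  rw [← sub_le_iff_le_add]
  refine le_csInf hne12 ?_
  rintro a ⟨A, hA, rfl⟩
  rw [sub_le_iff_le_add, ← sub_le_iff_le_add']
  refine le_csInf hne23 ?_
  rintro b ⟨B, hB, rfl⟩
  rw [sub_le_iff_le_add']
  calc Wdist G m₁ m₃
      ≤ ∑ x, ∑ z, (∑ y, if m₂ y = 0 then 0 else A x y * B y z / m₂ y) * (G.dist x z : ℝ) :=
        Wdist_le_of_coupling G (glue_coupling hA hB)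
    _ ≤ (∑ x, ∑ y, A x y * (G.dist x y : ℝ)) + ∑ y, ∑ z, B y z * (G.dist y z : ℝ) :=
        glue_cost G hc hA hB

end WGen

namespace GnpAux
variable {n : ℕ}
open Finset

lemma labGraph_reach (k : ℕ) : ∀ G₁ G₂ : LabGraph n,
    (symmDiff G₁.val G₂.val).card ≤ k → (vertexGraph n).Reachable G₁ G₂ := by
  induction k with
  | zero =>
    intro G₁ G₂ h
    have h0 : symmDiff G₁.val G₂.val = ∅ := Finset.card_eq_zero.1 (Nat.le_zero.1 h)
    have : G₁ = G₂ := Subtype.ext (symmDiff_eq_bot.1 h0)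
    exact this ▸ SimpleGraph.Reachable.refl _
  | succ k ih =>
    intro G₁ G₂ h
    by_cases h0 : (symmDiff G₁.val G₂.val).card = 0
    · have h0' : symmDiff G₁.val G₂.val = ∅ := Finset.card_eq_zero.1 h0
      have : G₁ = G₂ := Subtype.ext (symmDiff_eq_bot.1 h0')
      exact this ▸ SimpleGraph.Reachable.refl _
    obtain ⟨e, he⟩ := Finset.card_pos.1 (Nat.pos_of_ne_zero h0)
    have hex : ∃ u, u ∈ e := by
      induction e using Sym2.ind with
      | _ a b => exact ⟨a, Sym2.mem_mk_left a b⟩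
    obtain ⟨u, hu⟩ := hex
    set G₁' := phi G₁ u G₂ with hG₁'
    have hstep : (vertexGraph n).Reachable G₁ G₁' := by
      by_cases heq : G₁ = G₁'
      · rw [← heq]
      · exact SimpleGraph.Adj.reachable ⟨heq, u, (phi_delVert G₁ u G₂).symm⟩
    have hD : symmDiff G₁'.val G₂.val = (symmDiff G₁.val G₂.val).filter (fun a => u ∉ a) := by
      ext a
      simp only [Finset.mem_symmDiff, Finset.mem_filter, hG₁', phi, Finset.mem_union,
        delVert, star2, Finset.mem_filter]
      by_cases ha : u ∈ a <;> tauto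
    have hcard : (symmDiff G₁'.val G₂.val).card ≤ k := by
      rw [hD]
      have hss : (symmDiff G₁.val G₂.val).filter (fun a => u ∉ a) ⊂ symmDiff G₁.val G₂.val :=
        Finset.filter_ssubset.2 ⟨e, he, fun hne => hne hu⟩
      have := Finset.card_lt_card hss
      omega
    exact hstep.trans (ih G₁' G₂ hcard)

lemma vertexGraph_connected (n : ℕ) : (vertexGraph n).Connected := by
  rw [SimpleGraph.connected_iff]
  exact ⟨fun G₁ G₂ => labGraph_reach _ G₁ G₂ le_rfl, ⟨⟨∅, by simp⟩⟩⟩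

end GnpAux


namespace GnpAux
open Finset
variable {n : ℕ}

lemma adj_W_le (hn : 0 < n) {p : ℝ} (hp0 : 0 ≤ p) (hp1 : p ≤ 1) {G₁ G₂ : LabGraph n}
    (hadj : (vertexGraph n).Adj G₁ G₂) :
    Wdist (vertexGraph n) (gnpWalk n p G₁) (gnpWalk n p G₂) ≤ ((n:ℝ) - 1) / n := by
  classical
  obtain ⟨hne, v, hv⟩ := hadj
  set A : LabGraph n → LabGraph n → ℝ := fun H₁ H₂ =>
    (1 / (n:ℝ)) * ∑ u ∈ Finset.univ.filter
      (fun u => delVert G₁.val u = delVert H₁.val u ∧ phi G₂ u H₁ = H₂), wgt p H₁ u with hAdef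
  have hnR : (0:ℝ) < (n:ℝ) := by exact_mod_cast hn
  -- marginal 1
  have m1 : ∀ H₁, ∑ H₂, A H₁ H₂ = gnpWalk n p G₁ H₁ := by
    intro H₁
    rw [← Finset.mul_sum, gnpWalk_apply]
    congr 1
    simp_rw [Finset.sum_filter]
    rw [Finset.sum_comm]
    refine Finset.sum_congr rfl fun u _ => ?_
    by_cases hc : delVert G₁.val u = delVert H₁.val u
    · simp [hc]
    · simp [hc]
  -- marginal 2
  have m2 : ∀ H₂, ∑ H₁, A H₁ H₂ = gnpWalk n p G₂ H₂ := by
    intro H₂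
    have inner : ∀ u : Fin n,
        (Finset.univ.filter (fun H₁ : LabGraph n =>
          delVert G₁.val u = delVert H₁.val u ∧ phi G₂ u H₁ = H₂))
        = if delVert G₂.val u = delVert H₂.val u then {phi G₁ u H₂} else ∅ := by
      intro u
      split
      · rename_i hd
        ext H₁
        simp only [Finset.mem_filter, Finset.mem_univ, true_and, Finset.mem_singleton]
        constructor
        · rintro ⟨h1, h2⟩
          apply Subtype.ext
          have hstar : star2 H₁.val u = star2 H₂.val u := by
            rw [← h2, phi_star2]
          show H₁.val = (phi G₁ u H₂).val
          show H₁.val = delVert G₁.val u ∪ star2 H₂.val u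
          conv_lhs => rw [← delVert_union_star2 H₁.val u]
          rw [← h1, hstar]
        · rintro rfl
          refine ⟨(phi_delVert _ _ _).symm, ?_⟩
          apply Subtype.ext
          show delVert G₂.val u ∪ star2 (phi G₁ u H₂).val u = H₂.val
          rw [phi_star2, hd, delVert_union_star2]
      · rename_i hd
        ext H₁
        simp only [Finset.mem_filter, Finset.mem_univ, true_and, Finset.notMem_empty,
          iff_false, not_and]
        intro h1 h2
        exact hd (by rw [← h2, phi_delVert])
    rw [gnpWalk_apply, ← Finset.mul_sum]
    congr 1
    have lhs_eq : ∀ u : Fin n, (∑ H₁ : LabGraph n,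
        if delVert G₁.val u = delVert H₁.val u ∧ phi G₂ u H₁ = H₂ then wgt p H₁ u else 0)
        = if delVert G₂.val u = delVert H₂.val u then wgt p H₂ u else 0 := by
      intro u
      rw [← Finset.sum_filter, inner u]
      split
      · rw [Finset.sum_singleton, wgt, wgt, phi_deg]
      · exact Finset.sum_empty
    calc ∑ H₁ : LabGraph n, ∑ u ∈ Finset.univ.filter (fun u =>
          delVert G₁.val u = delVert H₁.val u ∧ phi G₂ u H₁ = H₂), wgt p H₁ u
        = ∑ H₁ : LabGraph n, ∑ u : Fin n,
            (if delVert G₁.val u = delVert H₁.val u ∧ phi G₂ u H₁ = H₂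
              then wgt p H₁ u else 0) := by
          refine Finset.sum_congr rfl fun H₁ _ => Finset.sum_filter _ _
      _ = ∑ u : Fin n, ∑ H₁ : LabGraph n,
            (if delVert G₁.val u = delVert H₁.val u ∧ phi G₂ u H₁ = H₂
              then wgt p H₁ u else 0) := Finset.sum_comm
      _ = ∑ u : Fin n, (if delVert G₂.val u = delVert H₂.val u then wgt p H₂ u else 0) :=
          Finset.sum_congr rfl fun u _ => lhs_eq u
      _ = ∑ u ∈ Finset.univ.filter (fun u => delVert G₂.val u = delVert H₂.val u),
            wgt p H₂ u := (Finset.sum_filter _ _).symm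
  have hcoup : IsCoupling (gnpWalk n p G₁) (gnpWalk n p G₂) A := by
    refine ⟨fun H₁ H₂ => ?_, m1, m2⟩
    exact mul_nonneg (by positivity)
      (Finset.sum_nonneg fun u _ => wgt_nonneg hp0 hp1 H₁ u)
  -- distance bound per term
  have hdist : ∀ (H₁ : LabGraph n) (u : Fin n), delVert G₁.val u = delVert H₁.val u →
      ((vertexGraph n).dist H₁ (phi G₂ u H₁) : ℝ) ≤ (if u = v then 0 else 1) := by
    intro H₁ u hc
    by_cases huv : u = v
    · subst huv
      have hfix : phi G₂ u H₁ = H₁ := Subtype.ext (by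
        show delVert G₂.val u ∪ star2 H₁.val u = H₁.val
        rw [← hv, hc, delVert_union_star2])
      rw [hfix, if_pos rfl, SimpleGraph.dist_self]
      norm_num
    · rw [if_neg huv]
      by_cases he : H₁ = phi G₂ u H₁
      · rw [← he, SimpleGraph.dist_self]
        norm_num
      · have h1 : H₁.val = delVert G₁.val u ∪ star2 H₁.val u := by
          conv_lhs => rw [← delVert_union_star2 H₁.val u]
          rw [← hc]
        have hdel : delVert H₁.val v = delVert (phi G₂ u H₁).val v := by
          calc delVert H₁.val v = delVert (delVert G₁.val u ∪ star2 H₁.val u) v := by rw [← h1]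
            _ = delVert (delVert G₁.val u) v ∪ delVert (star2 H₁.val u) v := delVert_union _ _ _
            _ = delVert (delVert G₂.val u) v ∪ delVert (star2 H₁.val u) v := by
                rw [delVert_delVert, hv, ← delVert_delVert]
            _ = delVert (phi G₂ u H₁).val v := (delVert_union _ _ _).symm
        have hAdj : (vertexGraph n).Adj H₁ (phi G₂ u H₁) := ⟨he, v, hdel⟩
        rw [SimpleGraph.dist_eq_one_iff_adj.2 hAdj]
        norm_num
  -- cost computation
  have cost_le : ∑ H₁, ∑ H₂, A H₁ H₂ * ((vertexGraph n).dist H₁ H₂ : ℝ) ≤ ((n:ℝ) - 1) / n := by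
    have step1 : ∀ H₁ : LabGraph n, ∑ H₂, A H₁ H₂ * ((vertexGraph n).dist H₁ H₂ : ℝ)
        = (1/(n:ℝ)) * ∑ u ∈ Finset.univ.filter
            (fun u => delVert G₁.val u = delVert H₁.val u),
            wgt p H₁ u * ((vertexGraph n).dist H₁ (phi G₂ u H₁) : ℝ) := by
      intro H₁
      have : ∀ H₂ : LabGraph n, A H₁ H₂ * ((vertexGraph n).dist H₁ H₂ : ℝ)
          = (1/(n:ℝ)) * ∑ u : Fin n,
            (if delVert G₁.val u = delVert H₁.val u ∧ phi G₂ u H₁ = H₂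
              then wgt p H₁ u * ((vertexGraph n).dist H₁ (phi G₂ u H₁) : ℝ) else 0) := by
        intro H₂
        rw [hAdef]
        dsimp only
        rw [mul_assoc]
        congr 1
        rw [Finset.sum_mul, Finset.sum_filter]
        refine Finset.sum_congr rfl fun u _ => ?_
        split
        · rename_i hcond
          rw [hcond.2]
        · rfl
      rw [Finset.sum_congr rfl fun H₂ _ => this H₂, ← Finset.mul_sum]
      congr 1
      rw [Finset.sum_comm, Finset.sum_filter]
      refine Finset.sum_congr rfl fun u _ => ?_
      by_cases hc : delVert G₁.val u = delVert H₁.val u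
      · simp [hc]
      · simp [hc]
    calc ∑ H₁, ∑ H₂, A H₁ H₂ * ((vertexGraph n).dist H₁ H₂ : ℝ)
        = (1/(n:ℝ)) * ∑ H₁ : LabGraph n, ∑ u ∈ Finset.univ.filter
            (fun u => delVert G₁.val u = delVert H₁.val u),
            wgt p H₁ u * ((vertexGraph n).dist H₁ (phi G₂ u H₁) : ℝ) := by
          rw [Finset.mul_sum]
          exact Finset.sum_congr rfl fun H₁ _ => step1 H₁
      _ ≤ (1/(n:ℝ)) * ∑ H₁ : LabGraph n, ∑ u ∈ Finset.univ.filter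
            (fun u => delVert G₁.val u = delVert H₁.val u),
            wgt p H₁ u * (if u = v then 0 else 1) := by
          refine mul_le_mul_of_nonneg_left ?_ (by positivity)
          refine Finset.sum_le_sum fun H₁ _ => Finset.sum_le_sum fun u hu => ?_
          exact mul_le_mul_of_nonneg_left
            (hdist H₁ u (Finset.mem_filter.1 hu).2) (wgt_nonneg hp0 hp1 H₁ u)
      _ = (1/(n:ℝ)) * ∑ u : Fin n, (if u = v then 0 else 1) *
            ∑ H₁ ∈ Finset.univ.filter
              (fun H₁ : LabGraph n => delVert G₁.val u = delVert H₁.val u), wgt p H₁ u := by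
          congr 1
          calc ∑ H₁ : LabGraph n, ∑ u ∈ Finset.univ.filter
                (fun u => delVert G₁.val u = delVert H₁.val u),
                wgt p H₁ u * (if u = v then 0 else 1)
              = ∑ H₁ : LabGraph n, ∑ u : Fin n,
                (if delVert G₁.val u = delVert H₁.val u
                  then wgt p H₁ u * (if u = v then 0 else 1) else 0) :=
                Finset.sum_congr rfl fun H₁ _ => Finset.sum_filter _ _
            _ = ∑ u : Fin n, ∑ H₁ : LabGraph n,
                (if delVert G₁.val u = delVert H₁.val u
                  then wgt p H₁ u * (if u = v then 0 else 1) else 0) := Finset.sum_comm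
            _ = ∑ u : Fin n, (if u = v then 0 else 1) *
                ∑ H₁ ∈ Finset.univ.filter
                  (fun H₁ : LabGraph n => delVert G₁.val u = delVert H₁.val u), wgt p H₁ u := by
                refine Finset.sum_congr rfl fun u _ => ?_
                rw [Finset.mul_sum, Finset.sum_filter]
                refine Finset.sum_congr rfl fun H₁ _ => ?_
                split
                · rw [mul_comm]
                · rfl
      _ = (1/(n:ℝ)) * ∑ u : Fin n, (if u = v then 0 else 1) := by
          congr 1
          refine Finset.sum_congr rfl fun u _ => ?_
          rw [sum_wgt p G₁ u, mul_one]
      _ = (1/(n:ℝ)) * ((n:ℝ) - 1) := by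
          congr 1
          have : ∀ u : Fin n, (if u = v then (0:ℝ) else 1) = 1 - (if u = v then 1 else 0) := by
            intro u; split <;> norm_num
          rw [Finset.sum_congr rfl fun u _ => this u, Finset.sum_sub_distrib]
          simp [Finset.sum_ite_eq']
      _ = ((n:ℝ) - 1) / n := by field_simp
  exact (Wdist_le_of_coupling _ hcoup).trans cost_le

end GnpAux

namespace GnpAux
open Finset
variable {n : ℕ}

lemma W_bound (hn : 0 < n) {p : ℝ} (hp0 : 0 ≤ p) (hp1 : p ≤ 1) :
    ∀ (k : ℕ) (G₁ G₂ : LabGraph n), (vertexGraph n).dist G₁ G₂ ≤ k →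
      Wdist (vertexGraph n) (gnpWalk n p G₁) (gnpWalk n p G₂)
        ≤ (1 - 1/(n:ℝ)) * ((vertexGraph n).dist G₁ G₂ : ℝ) := by
  intro k
  induction k with
  | zero =>
    intro G₁ G₂ h
    have h0 : (vertexGraph n).dist G₁ G₂ = 0 := Nat.le_zero.1 h
    have heq : G₁ = G₂ := ((vertexGraph_connected n).dist_eq_zero_iff).1 h0
    subst heq
    rw [h0, Nat.cast_zero, mul_zero]
    exact Wdist_self_nonpos _ (fun H => gnpWalk_nonneg hp0 hp1 G₁ H)
  | succ k ih =>
    intro G₁ G₂ h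
    rcases Nat.lt_or_ge ((vertexGraph n).dist G₁ G₂) (k+1) with hlt | hge
    · exact ih G₁ G₂ (Nat.lt_succ_iff.1 hlt)
    have hd : (vertexGraph n).dist G₁ G₂ = k + 1 := le_antisymm h hge
    have hd' : (vertexGraph n).dist G₂ G₁ = k + 1 := by rw [SimpleGraph.dist_comm, hd]
    obtain ⟨w, hw⟩ := (vertexGraph_connected n).exists_walk_length_eq_dist G₂ G₁
    rw [hd'] at hw
    cases w with
    | nil => simp at hw
    | cons hadj q =>
      rename_i y
      rw [SimpleGraph.Walk.length_cons] at hw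
      have hwq : q.length = k := by omega
      have hdist1 : (vertexGraph n).dist G₁ y ≤ k := by
        have hle := SimpleGraph.dist_le q.reverse
        rwa [SimpleGraph.Walk.length_reverse, hwq] at hle
      have hIH := ih G₁ y hdist1
      have hAdj : (vertexGraph n).Adj y G₂ := hadj.symm
      have hadjW := adj_W_le hn hp0 hp1 hAdj
      have htri := Wdist_triangle (vertexGraph n) (vertexGraph_connected n)
        ⟨_, prod_coupling (gnpWalk_isProbVec hn hp0 hp1 G₁) (gnpWalk_isProbVec hn hp0 hp1 y)⟩
        ⟨_, prod_coupling (gnpWalk_isProbVec hn hp0 hp1 y) (gnpWalk_isProbVec hn hp0 hp1 G₂)⟩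
      have h1n : (1:ℝ) ≤ (n:ℝ) := by exact_mod_cast hn
      have hfrac : ((n:ℝ)-1)/n = 1 - 1/(n:ℝ) := by
        field_simp
      have hdy : ((vertexGraph n).dist G₁ y : ℝ) ≤ (k:ℝ) := by exact_mod_cast hdist1
      have hnn : (0:ℝ) ≤ 1 - 1/(n:ℝ) := by
        have hle1 : 1/(n:ℝ) ≤ 1 := by
          rw [div_le_one (by linarith)]; exact h1n
        linarith
      rw [hd]
      have key : Wdist (vertexGraph n) (gnpWalk n p G₁) (gnpWalk n p G₂)
          ≤ (1 - 1/(n:ℝ)) * (k:ℝ) + (1 - 1/(n:ℝ)) := by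
        calc Wdist (vertexGraph n) (gnpWalk n p G₁) (gnpWalk n p G₂)
            ≤ Wdist (vertexGraph n) (gnpWalk n p G₁) (gnpWalk n p y)
              + Wdist (vertexGraph n) (gnpWalk n p y) (gnpWalk n p G₂) := htri
          _ ≤ (1 - 1/(n:ℝ)) * ((vertexGraph n).dist G₁ y : ℝ) + ((n:ℝ)-1)/n :=
              add_le_add hIH hadjW
          _ ≤ (1 - 1/(n:ℝ)) * (k:ℝ) + (1 - 1/(n:ℝ)) := by
              rw [hfrac]
              exact add_le_add_left (mul_le_mul_of_nonneg_left hdy hnn) _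
      have expand : (1 - 1/(n:ℝ)) * ((k:ℕ) + 1 : ℕ) = (1 - 1/(n:ℝ)) * (k:ℝ) + (1 - 1/(n:ℝ)) := by
        push_cast
        ring
      rw [expand]
      exact key

end GnpAux

/-- The vertex re-randomization walk on labeled `n`-vertex graphs
(whose invariant distribution is `G(n,p)`) has Ricci curvature at least `1/n` for
all pairs of graphs. -/
theorem gnp_ricci_ge (n : ℕ) (hn : 0 < n) (p : ℝ) (hp0 : 0 < p) (hp1 : p < 1) :
    ∀ G₁ G₂ : LabGraph n,
      (1 : ℝ) / (n : ℝ) ≤ ricci (vertexGraph n) (gnpWalk n p) G₁ G₂ := by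
  intro G₁ G₂
  have h1n : (1:ℝ) ≤ (n:ℝ) := by exact_mod_cast hn
  have h1n' : (1:ℝ)/(n:ℝ) ≤ 1 := by rw [div_le_one (by linarith)]; exact h1n
  unfold ricci
  by_cases h0 : (vertexGraph n).dist G₁ G₂ = 0
  · rw [h0, Nat.cast_zero, div_zero]
    linarith
  · have hdpos : 0 < (vertexGraph n).dist G₁ G₂ := Nat.pos_of_ne_zero h0
    have hdR : (0:ℝ) < ((vertexGraph n).dist G₁ G₂ : ℝ) := by exact_mod_cast hdpos
    have hW := GnpAux.W_bound hn hp0.le hp1.le ((vertexGraph n).dist G₁ G₂) G₁ G₂ le_rfl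
    have hdiv : Wdist (vertexGraph n) (gnpWalk n p G₁) (gnpWalk n p G₂)
        / ((vertexGraph n).dist G₁ G₂ : ℝ) ≤ 1 - 1/(n:ℝ) := by
      rw [div_le_iff₀ hdR]
      linarith [hW]
    linarith
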